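/- Let (f_m) and (g_m) be sequences of Lipschitz functions on [0,1] with uniformly bounded Lipschitz constants that converge pointwise to f and g respectively. Then ∫_0^1 f_m dg_m converges to ∫_0^1 f dg. -/

import Mathlib

open Set Filter intervalIntegral
open MeasureTheory

lemma abs_deriv_le {C : NNReal} {u : ℝ → ℝ} (hu : LipschitzWith C u) (x : ℝ) : |deriv u x| ≤ C := by
  by_cases h : DifferentiableAt ℝ u x
  · have h1 : ‖fderiv ℝ u x‖ ≤ C := norm_fderiv_le_of_lipschitz ℝ hu
    have h2 : deriv u x = fderiv ℝ u x 1 := by rw [← toSpanSingleton_deriv]; simp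
    rw [← Real.norm_eq_abs, h2]
    calc ‖fderiv ℝ u x 1‖ ≤ ‖fderiv ℝ u x‖ * ‖(1:ℝ)‖ := (fderiv ℝ u x).le_opNorm 1
    _ ≤ C := by simpa using h1
  · rw [deriv_zero_of_not_differentiableAt h]; simp

-- averages tend to the value, along 1/(n+1)
lemma avg_tendsto {u : ℝ → ℝ} (hu : Continuous u) (c : ℝ) :
    Tendsto (fun n : ℕ => (∫ t in c..(c + 1/((n:ℝ)+1)), u t) / (1/((n:ℝ)+1))) atTop (nhds (u c)) := by
  have hH : HasDerivAt (fun x => ∫ t in c..x, u t) (u c) c :=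
    intervalIntegral.integral_hasDerivAt_right (hu.intervalIntegrable c c)
      (hu.stronglyMeasurableAtFilter _ _) hu.continuousAt
  have hslope := hasDerivAt_iff_tendsto_slope.mp hH
  have hseq : Tendsto (fun n : ℕ => c + 1/((n:ℝ)+1)) atTop (nhdsWithin c {c}ᶜ) := by
    apply tendsto_nhdsWithin_iff.mpr
    constructor
    · simpa using (tendsto_const_nhds.add (tendsto_one_div_add_atTop_nhds_zero_nat (𝕜 := ℝ)))
    · filter_upwards with n
      have : (0:ℝ) < 1/((n:ℝ)+1) := by positivity
      simp only [mem_compl_iff, mem_singleton_iff]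
      intro h
      nlinarith [congrArg (fun x => x - c) h]
  have := hslope.comp hseq
  convert this using 2 with n
  simp only [Function.comp_apply, slope_def_field, intervalIntegral.integral_same]
  rw [add_sub_cancel_left, sub_zero]


lemma lipschitz_ftc {C : NNReal} {u : ℝ → ℝ} (hu : LipschitzWith C u) {a b : ℝ} (hab : a ≤ b) :
    ∫ t in a..b, deriv u t = u b - u a := by
  set ε : ℕ → ℝ := fun n => 1/((n:ℝ)+1) with hε
  have hεpos : ∀ n, 0 < ε n := fun n => by positivity
  have hcont := hu.continuous
  have hint : ∀ c d : ℝ, IntervalIntegrable u volume c d := fun c d => hcont.intervalIntegrable c d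
  -- key algebraic identity
  have key : ∀ n : ℕ, ∫ t in a..b, (u (t + ε n) - u t) / ε n
      = (∫ t in b..(b + ε n), u t) / ε n - (∫ t in a..(a + ε n), u t) / ε n := by
    intro n
    have hi : IntervalIntegrable (fun t => u (t + ε n)) volume a b :=
      (hcont.comp (continuous_add_right (ε n))).intervalIntegrable a b
    have h1 : ∫ t in a..b, (u (t + ε n) - u t) = (∫ t in (a + ε n)..(b + ε n), u t) - ∫ t in a..b, u t := by
      rw [intervalIntegral.integral_sub hi (hint a b),
        intervalIntegral.integral_comp_add_right u (ε n)]
    have h2 : (∫ t in a..(a + ε n), u t) + (∫ t in (a + ε n)..(b + ε n), u t) = ∫ t in a..(b + ε n), u t :=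
      intervalIntegral.integral_add_adjacent_intervals (hint _ _) (hint _ _)
    have h3 : (∫ t in a..b, u t) + (∫ t in b..(b + ε n), u t) = ∫ t in a..(b + ε n), u t :=
      intervalIntegral.integral_add_adjacent_intervals (hint _ _) (hint _ _)
    have h4 : ∫ t in a..b, (u (t + ε n) - u t) / ε n = (∫ t in a..b, (u (t + ε n) - u t)) / ε n :=
      intervalIntegral.integral_div _ _
    rw [h4, h1, div_sub_div_same]
    congr 1
    linarith
  -- limit of RHS
  have hR : Tendsto (fun n : ℕ => (∫ t in b..(b + ε n), u t) / ε n - (∫ t in a..(a + ε n), u t) / ε n)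
      atTop (nhds (u b - u a)) := (avg_tendsto hcont b).sub (avg_tendsto hcont a)
  -- limit of LHS by dominated convergence
  have hL : Tendsto (fun n : ℕ => ∫ t in a..b, (u (t + ε n) - u t) / ε n) atTop
      (nhds (∫ t in a..b, deriv u t)) := by
    apply intervalIntegral.tendsto_integral_filter_of_dominated_convergence (fun _ => (C : ℝ))
    · filter_upwards with n
      exact (((hcont.comp (continuous_add_right (ε n))).sub hcont).div_const _).aestronglyMeasurable
    · filter_upwards with n
      filter_upwards with t _
      have hd : dist (u (t + ε n)) (u t) ≤ C * dist (t + ε n) t := hu.dist_le_mul _ _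
      rw [Real.dist_eq, Real.dist_eq, add_sub_cancel_left, abs_of_pos (hεpos n)] at hd
      rw [Real.norm_eq_abs, abs_div, abs_of_pos (hεpos n), div_le_iff₀ (hεpos n)]
      exact hd
    · exact intervalIntegrable_const
    · have hae : ∀ᵐ t : ℝ, DifferentiableAt ℝ u t := hu.ae_differentiableAt
      filter_upwards [hae] with t ht _
      have hslope := hasDerivAt_iff_tendsto_slope.mp ht.hasDerivAt
      have hseq : Tendsto (fun n : ℕ => t + ε n) atTop (nhdsWithin t {t}ᶜ) := by
        apply tendsto_nhdsWithin_iff.mpr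
        refine ⟨?_, ?_⟩
        · have : Tendsto (fun n : ℕ => t + ε n) atTop (nhds (t + 0)) :=
            tendsto_const_nhds.add tendsto_one_div_add_atTop_nhds_zero_nat
          simpa using this
        filter_upwards with n
        simp only [mem_compl_iff, mem_singleton_iff]
        intro h
        have := hεpos n
        nlinarith [congrArg (fun x => x - t) h]
      have := hslope.comp hseq
      convert this using 2 with n
      simp only [Function.comp_apply, slope_def_field]
      rw [add_sub_cancel_left]
  have := tendsto_nhds_unique hL (by rw [funext key] at hL ⊢; exact hR)
  exact this


noncomputable def clamp : ℝ → ℝ := fun t => max 0 (min 1 t)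

lemma clamp_lipschitz : LipschitzWith 1 clamp := by
  apply LipschitzWith.of_dist_le_mul
  intro x y
  simp only [clamp, Real.dist_eq, NNReal.coe_one, one_mul]
  calc |max 0 (min 1 x) - max 0 (min 1 y)| = |max (min 1 x) 0 - max (min 1 y) 0| := by
        rw [max_comm 0 _, max_comm 0 _]
  _ ≤ |min 1 x - min 1 y| := abs_max_sub_max_le_abs _ _ _
  _ ≤ max |(1:ℝ) - 1| |x - y| := abs_min_sub_min_le_max _ _ _ _
  _ ≤ |x - y| := by simp

lemma clamp_mem (t : ℝ) : clamp t ∈ Icc (0:ℝ) 1 := by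
  exact ⟨le_max_left _ _, max_le zero_le_one (min_le_left _ _)⟩

lemma clamp_eq {t : ℝ} (ht : t ∈ Icc (0:ℝ) 1) : clamp t = t := by
  simp only [clamp, min_eq_right ht.2, max_eq_right ht.1]

lemma bounded_integrable {w : ℝ → ℝ} {M : ℝ}
    (hm : AEStronglyMeasurable w (volume.restrict (Set.Ioc (0:ℝ) 1)))
    (hb : ∀ t ∈ Set.Ioc (0:ℝ) 1, |w t| ≤ M) : IntervalIntegrable w volume 0 1 := by
  rw [intervalIntegrable_iff, uIoc_of_le zero_le_one]
  apply Integrable.mono' (g := fun _ => M) (integrableOn_const measure_Ioc_lt_top.ne) hm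
  filter_upwards [ae_restrict_mem measurableSet_Ioc] with t ht
  rw [Real.norm_eq_abs]; exact hb t ht

lemma lipschitz_of_bounded_mul {K : NNReal} {u v : ℝ → ℝ} (hu : LipschitzWith K u)
    (hv : LipschitzWith K v) {M : ℝ} (hMu : ∀ x, |u x| ≤ M) (hMv : ∀ x, |v x| ≤ M) :
    LipschitzWith (2 * M.toNNReal * K) (fun x => u x * v x) := by
  apply LipschitzWith.of_dist_le_mul
  intro x y
  have h1 : dist (u x) (u y) ≤ K * dist x y := hu.dist_le_mul x y
  have h2 : dist (v x) (v y) ≤ K * dist x y := hv.dist_le_mul x y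
  rw [Real.dist_eq] at h1 h2 ⊢
  have hM : M ≤ (M.toNNReal : ℝ) := Real.le_coe_toNNReal M
  have e1 : |u x * v x - u y * v y| ≤ |u x| * |v x - v y| + |v y| * |u x - u y| := by
    have : u x * v x - u y * v y = u x * (v x - v y) + v y * (u x - u y) := by ring
    rw [this]
    exact (abs_add_le _ _).trans (by rw [abs_mul, abs_mul])
  have hMu' := hMu x; have hMv' := hMv y
  have hd : (0:ℝ) ≤ dist x y := dist_nonneg
  rw [Real.dist_eq] at hd
  push_cast
  nlinarith [abs_nonneg (v x - v y), abs_nonneg (u x - u y), abs_nonneg (u x), abs_nonneg (v y)]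

lemma byparts {C : NNReal} {p q : ℝ → ℝ} (hp : LipschitzWith C p) (hq : LipschitzWith C q) :
    ∫ t in (0:ℝ)..1, p t * deriv q t
      = p 1 * q 1 - p 0 * q 0 - ∫ t in (0:ℝ)..1, deriv p t * q t := by
  -- clamped versions
  set pr : ℝ → ℝ := fun t => p (clamp t) with hpr
  set qr : ℝ → ℝ := fun t => q (clamp t) with hqr
  have hprl : LipschitzWith (C * 1) pr := hp.comp clamp_lipschitz
  have hqrl : LipschitzWith (C * 1) qr := hq.comp clamp_lipschitz
  set M : ℝ := |p 0| + |q 0| + C with hM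
  have hMp : ∀ x, |pr x| ≤ M := by
    intro x
    have h1 : |p (clamp x) - p 0| ≤ C * |clamp x - 0| := by
      have := hp.dist_le_mul (clamp x) 0; rwa [Real.dist_eq, Real.dist_eq] at this
    have h2 := clamp_mem x
    have : |clamp x - 0| ≤ 1 := by rw [sub_zero, abs_of_nonneg h2.1]; exact h2.2
    have := abs_sub_abs_le_abs_sub (p (clamp x)) (p 0)
    have hc : (0:ℝ) ≤ C := C.2
    simp only [hM]
    nlinarith [abs_nonneg (q 0)]
  have hMq : ∀ x, |qr x| ≤ M := by
    intro x
    have h1 : |q (clamp x) - q 0| ≤ C * |clamp x - 0| := by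
      have := hq.dist_le_mul (clamp x) 0; rwa [Real.dist_eq, Real.dist_eq] at this
    have h2 := clamp_mem x
    have : |clamp x - 0| ≤ 1 := by rw [sub_zero, abs_of_nonneg h2.1]; exact h2.2
    have := abs_sub_abs_le_abs_sub (q (clamp x)) (q 0)
    have hc : (0:ℝ) ≤ C := C.2
    simp only [hM]
    nlinarith [abs_nonneg (p 0)]
  have hrl : LipschitzWith (2 * M.toNNReal * (C * 1)) (fun x => pr x * qr x) :=
    lipschitz_of_bounded_mul hprl hqrl hMp hMq
  -- FTC for the product
  have hftc : ∫ t in (0:ℝ)..1, deriv (fun x => pr x * qr x) t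
      = p 1 * q 1 - p 0 * q 0 := by
    rw [lipschitz_ftc hrl zero_le_one]
    simp only [hpr, hqr, clamp_eq (by norm_num : (1:ℝ) ∈ Icc (0:ℝ) 1),
      clamp_eq (by norm_num : (0:ℝ) ∈ Icc (0:ℝ) 1)]
  -- a.e. identification of derivatives on (0,1)
  have hcongr : ∫ t in (0:ℝ)..1, deriv (fun x => pr x * qr x) t
      = ∫ t in (0:ℝ)..1, (deriv p t * q t + p t * deriv q t) := by
    apply intervalIntegral.integral_congr_ae
    have h1 : ∀ᵐ x : ℝ, x ≠ 1 := by
      have : (volume : Measure ℝ) {(1:ℝ)} = 0 := measure_singleton 1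
      have := measure_eq_zero_iff_ae_notMem.mp this
      filter_upwards [this] with x hx
      simpa using hx
    filter_upwards [hp.ae_differentiableAt, hq.ae_differentiableAt, h1] with x hxp hxq hx1 hxI
    rw [uIoc_of_le zero_le_one] at hxI
    have hxo : x ∈ Ioo (0:ℝ) 1 := ⟨hxI.1, lt_of_le_of_ne hxI.2 hx1⟩
    have heq : (fun x => pr x * qr x) =ᶠ[nhds x] (fun t => p t * q t) := by
      filter_upwards [isOpen_Ioo.mem_nhds hxo] with y hy
      simp only [hpr, hqr, clamp_eq (Ioo_subset_Icc_self hy)]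
    rw [heq.deriv_eq, deriv_fun_mul hxp hxq]
  -- split the integral
  have hbd : ∀ t ∈ Set.Ioc (0:ℝ) 1, |q t| ≤ M := by
    intro t ht
    have h : qr t = q t := by
      simp only [hqr]
      exact congrArg q (clamp_eq (Ioc_subset_Icc_self ht))
    rw [← h]; exact hMq t
  have hbp : ∀ t ∈ Set.Ioc (0:ℝ) 1, |p t| ≤ M := by
    intro t ht
    have h : pr t = p t := by
      simp only [hpr]
      exact congrArg p (clamp_eq (Ioc_subset_Icc_self ht))
    rw [← h]; exact hMp t
  have hi1 : IntervalIntegrable (fun t => deriv p t * q t) volume 0 1 := by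
    apply bounded_integrable
    · exact ((measurable_deriv p).aestronglyMeasurable.mul hq.continuous.aestronglyMeasurable).restrict
    · intro t ht
      rw [abs_mul]
      have h1 := abs_deriv_le hp t
      have h2 := hbd t ht
      have : (0:ℝ) ≤ C := C.2
      exact mul_le_mul h1 h2 (abs_nonneg _) this |>.trans_eq rfl
  have hi2 : IntervalIntegrable (fun t => p t * deriv q t) volume 0 1 := by
    apply bounded_integrable
    · exact (hp.continuous.aestronglyMeasurable.mul (measurable_deriv q).aestronglyMeasurable).restrict
    · intro t ht
      rw [abs_mul]
      have h1 := abs_deriv_le hq t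
      have h2 := hbp t ht
      have hM0 : (0:ℝ) ≤ M := (abs_nonneg _).trans (hbp t ht)
      calc |p t| * |deriv q t| ≤ M * C := mul_le_mul h2 h1 (abs_nonneg _) hM0
      _ = M * C := rfl
  have hsplit : ∫ t in (0:ℝ)..1, (deriv p t * q t + p t * deriv q t)
      = (∫ t in (0:ℝ)..1, deriv p t * q t) + ∫ t in (0:ℝ)..1, p t * deriv q t :=
    intervalIntegral.integral_add hi1 hi2
  rw [hcongr, hsplit] at hftc
  linarith


/-- If `(f_m)` and `(g_m)` are sequences of Lipschitz functions on `[0,1]`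
with uniformly bounded Lipschitz constants converging pointwise to (Lipschitz
functions) `f` and `g` respectively, then the Riemann–Stieltjes integrals
`∫_0^1 f_m dg_m = ∫_0^1 f_m(t) g_m'(t) dt` converge to
`∫_0^1 f dg = ∫_0^1 f(t) g'(t) dt`. -/
theorem stmt16 (F G : ℕ → ℝ → ℝ) (f g : ℝ → ℝ) (C : NNReal)
    (hF : ∀ m, LipschitzWith C (F m))
    (hG : ∀ m, LipschitzWith C (G m))
    (hf : LipschitzWith C f) (hg : LipschitzWith C g)
    (hFf : ∀ t ∈ Icc (0:ℝ) 1, Tendsto (fun m => F m t) atTop (nhds (f t)))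
    (hGg : ∀ t ∈ Icc (0:ℝ) 1, Tendsto (fun m => G m t) atTop (nhds (g t))) :
    Tendsto (fun m => ∫ t in (0:ℝ)..1, F m t * deriv (G m) t) atTop
      (nhds (∫ t in (0:ℝ)..1, f t * deriv g t)) := by
  have h01 : (0:ℝ) ∈ Icc (0:ℝ) 1 := by norm_num
  have h11 : (1:ℝ) ∈ Icc (0:ℝ) 1 := by norm_num
  have hC : (0:ℝ) ≤ C := C.2
  -- uniform bounds from convergence at 0
  obtain ⟨BF, hBF⟩ : ∃ B : ℝ, ∀ m, |F m 0 - f 0| ≤ B := by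
    have h : Tendsto (fun m => |F m 0 - f 0|) atTop (nhds |f 0 - f 0|) :=
      ((hFf 0 h01).sub tendsto_const_nhds).abs
    obtain ⟨B, hB⟩ := h.bddAbove_range
    exact ⟨B, fun m => hB ⟨m, rfl⟩⟩
  obtain ⟨BG, hBG⟩ : ∃ B : ℝ, ∀ m, |G m 0 - g 0| ≤ B := by
    have h : Tendsto (fun m => |G m 0 - g 0|) atTop (nhds |g 0 - g 0|) :=
      ((hGg 0 h01).sub tendsto_const_nhds).abs
    obtain ⟨B, hB⟩ := h.bddAbove_range
    exact ⟨B, fun m => hB ⟨m, rfl⟩⟩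
  have lipbound : ∀ (u : ℝ → ℝ), LipschitzWith C u → ∀ t ∈ Set.Ioc (0:ℝ) 1, |u t - u 0| ≤ C := by
    intro u hu t ht
    have := hu.dist_le_mul t 0
    rw [Real.dist_eq, Real.dist_eq, sub_zero] at this
    refine this.trans ?_
    have : |t| ≤ 1 := by rw [abs_of_pos ht.1]; exact ht.2
    nlinarith
  have hFb : ∀ m, ∀ t ∈ Set.Ioc (0:ℝ) 1, |F m t - f t| ≤ 2*C + BF := by
    intro m t ht
    have h1 := lipbound (F m) (hF m) t ht
    have h2 := lipbound f hf t ht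
    have h3 := hBF m
    have : F m t - f t = (F m t - F m 0) + (F m 0 - f 0) - (f t - f 0) := by ring
    calc |F m t - f t| = |(F m t - F m 0) + (F m 0 - f 0) - (f t - f 0)| := by rw [this]
    _ ≤ |F m t - F m 0| + |F m 0 - f 0| + |f t - f 0| := by
        have := abs_sub (F m t - F m 0 + (F m 0 - f 0)) (f t - f 0)
        have := abs_add_le (F m t - F m 0) (F m 0 - f 0)
        calc |(F m t - F m 0) + (F m 0 - f 0) - (f t - f 0)|
            ≤ |(F m t - F m 0) + (F m 0 - f 0)| + |f t - f 0| := abs_sub _ _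
        _ ≤ |F m t - F m 0| + |F m 0 - f 0| + |f t - f 0| := by
            have := abs_add_le (F m t - F m 0) (F m 0 - f 0); linarith
    _ ≤ 2*C + BF := by linarith
  have hGb : ∀ m, ∀ t ∈ Set.Ioc (0:ℝ) 1, |G m t| ≤ C + BG + |g 0| := by
    intro m t ht
    have h1 := lipbound (G m) (hG m) t ht
    have h3 := hBG m
    calc |G m t| = |(G m t - G m 0) + (G m 0 - g 0) + g 0| := by ring_nf
    _ ≤ |(G m t - G m 0) + (G m 0 - g 0)| + |g 0| := abs_add_le _ _
    _ ≤ |G m t - G m 0| + |G m 0 - g 0| + |g 0| := by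
        have := abs_add_le (G m t - G m 0) (G m 0 - g 0); linarith
    _ ≤ C + BG + |g 0| := by linarith
  have hfb : ∀ t ∈ Set.Ioc (0:ℝ) 1, |f t| ≤ C + |f 0| := by
    intro t ht
    have h1 := lipbound f hf t ht
    calc |f t| = |(f t - f 0) + f 0| := by ring_nf
    _ ≤ |f t - f 0| + |f 0| := abs_add_le _ _
    _ ≤ C + |f 0| := by linarith
  have hBF0 : (0:ℝ) ≤ BF := (abs_nonneg _).trans (hBF 0)
  have hBG0 : (0:ℝ) ≤ BG := (abs_nonneg _).trans (hBG 0)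
  -- integrability of the pieces
  have hint1 : ∀ m, IntervalIntegrable (fun t => (F m t - f t) * deriv (G m) t) volume 0 1 := by
    intro m
    apply bounded_integrable (M := (2*C + BF) * C)
    · exact ((((hF m).continuous.sub hf.continuous).aestronglyMeasurable).mul
        (measurable_deriv (G m)).aestronglyMeasurable).restrict
    · intro t ht
      rw [abs_mul]
      exact mul_le_mul (hFb m t ht) (abs_deriv_le (hG m) t) (abs_nonneg _)
        (by linarith)
  have hint2 : ∀ m, IntervalIntegrable (fun t => f t * deriv (G m) t) volume 0 1 := by
    intro m
    apply bounded_integrable (M := (C + |f 0|) * C)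
    · exact ((hf.continuous.aestronglyMeasurable).mul
        (measurable_deriv (G m)).aestronglyMeasurable).restrict
    · intro t ht
      rw [abs_mul]
      exact mul_le_mul (hfb t ht) (abs_deriv_le (hG m) t) (abs_nonneg _) (by positivity)
  -- split
  have hsum : ∀ m, ∫ t in (0:ℝ)..1, F m t * deriv (G m) t
      = (∫ t in (0:ℝ)..1, (F m t - f t) * deriv (G m) t)
        + ∫ t in (0:ℝ)..1, f t * deriv (G m) t := by
    intro m
    rw [← intervalIntegral.integral_add (hint1 m) (hint2 m)]
    apply intervalIntegral.integral_congr
    intro t _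
    ring
  -- first term tends to zero
  have T1 : Tendsto (fun m => ∫ t in (0:ℝ)..1, (F m t - f t) * deriv (G m) t) atTop (nhds 0) := by
    have hJ : Tendsto (fun m => ∫ t in (0:ℝ)..1, |F m t - f t| * C) atTop
        (nhds (∫ t in (0:ℝ)..1, (0:ℝ))) := by
      apply intervalIntegral.tendsto_integral_filter_of_dominated_convergence
        (fun _ => (2*C + BF) * C)
      · filter_upwards with m
        exact ((((hF m).continuous.sub hf.continuous).abs.mul continuous_const).aestronglyMeasurable).restrict
      · filter_upwards with m
        filter_upwards with t ht
        rw [uIoc_of_le zero_le_one] at ht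
        rw [Real.norm_eq_abs, abs_mul, abs_abs, abs_of_nonneg hC]
        exact mul_le_mul_of_nonneg_right (hFb m t ht) hC
      · exact intervalIntegrable_const
      · filter_upwards with t ht
        rw [uIoc_of_le zero_le_one] at ht
        have h := (hFf t (Ioc_subset_Icc_self ht)).sub (tendsto_const_nhds (x := f t))
        have h2 := h.abs.mul_const (C:ℝ)
        simpa using h2
    have hJ0 : Tendsto (fun m => ∫ t in (0:ℝ)..1, |F m t - f t| * C) atTop (nhds 0) := by
      simpa using hJ
    apply squeeze_zero_norm (a := fun m => |∫ t in (0:ℝ)..1, |F m t - f t| * C|)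
    · intro m
      apply intervalIntegral.norm_integral_le_abs_of_norm_le
      · filter_upwards with t
        rw [Real.norm_eq_abs, abs_mul]
        exact mul_le_mul_of_nonneg_left (abs_deriv_le (hG m) t) (abs_nonneg _)
      · exact (((hF m).continuous.sub hf.continuous).abs.mul continuous_const).intervalIntegrable 0 1
    · simpa using hJ0.abs
  -- second term tends to the limit, via integration by parts
  have hI : Tendsto (fun m => ∫ t in (0:ℝ)..1, deriv f t * G m t) atTop
      (nhds (∫ t in (0:ℝ)..1, deriv f t * g t)) := by
    apply intervalIntegral.tendsto_integral_filter_of_dominated_convergence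
      (fun _ => (C : ℝ) * (C + BG + |g 0|))
    · filter_upwards with m
      exact ((measurable_deriv f).aestronglyMeasurable.mul
        (hG m).continuous.aestronglyMeasurable).restrict
    · filter_upwards with m
      filter_upwards with t ht
      rw [uIoc_of_le zero_le_one] at ht
      rw [Real.norm_eq_abs, abs_mul]
      have h0 : (0:ℝ) ≤ C + BG + |g 0| := le_trans (abs_nonneg _) (hGb m t ht)
      exact mul_le_mul (abs_deriv_le hf t) (hGb m t ht) (abs_nonneg _) hC
    · exact intervalIntegrable_const
    · filter_upwards with t ht
      rw [uIoc_of_le zero_le_one] at ht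
      exact (hGg t (Ioc_subset_Icc_self ht)).const_mul (deriv f t)
  have T2 : Tendsto (fun m => ∫ t in (0:ℝ)..1, f t * deriv (G m) t) atTop
      (nhds (∫ t in (0:ℝ)..1, f t * deriv g t)) := by
    have e : (fun m => ∫ t in (0:ℝ)..1, f t * deriv (G m) t)
        = fun m => f 1 * G m 1 - f 0 * G m 0 - ∫ t in (0:ℝ)..1, deriv f t * G m t :=
      funext fun m => byparts hf (hG m)
    rw [e, byparts hf hg]
    exact (((hGg 1 h11).const_mul (f 1)).sub ((hGg 0 h01).const_mul (f 0))).sub hI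
  have := T1.add T2
  rw [funext hsum]
  simpa using this
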